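/- If h and k are positive integers with k ≡ 2 (mod 4) and h ≡ 2 (mod 4), then T(h,k) = 1 - 2·gcd(h,k). -/

import Mathlib

/-- `T(h,k) := ∑_{j=1}^{2k-1} (-1)^{j+1+⌊hj/k⌋}`. -/
def Tpair (h k : ℕ) : ℤ := ∑ j ∈ Finset.Icc 1 (2 * k - 1), (-1 : ℤ) ^ (j + 1 + h * j / k)

theorem stmt_19 (h k : ℕ) (hh : 0 < h) (hk : 0 < k) (hk4 : k % 4 = 2) (hh4 : h % 4 = 2) :
    Tpair h k = 1 - 2 * (Nat.gcd h k : ℤ) := by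
  classical
  set d := Nat.gcd h k with hd
  have hdh : d ∣ h := Nat.gcd_dvd_left h k
  have hdk : d ∣ k := Nat.gcd_dvd_right h k
  have hd0 : 0 < d := Nat.gcd_pos_of_pos_left _ hh
  set m := k / d with hm
  set a := h / d with ha
  have hkdm : d * m = k := Nat.mul_div_cancel' hdk
  have hda : d * a = h := Nat.mul_div_cancel' hdh
  have hcop : Nat.Coprime a m := Nat.coprime_div_gcd_div_gcd hd0
  have hm0 : 0 < m := Nat.div_pos (Nat.le_of_dvd hk hdk) hd0
  -- d % 4 = 2
  have h2d : 2 ∣ d := Nat.dvd_gcd (by omega) (by omega)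
  have h4d : ¬ (4 ∣ d) := by
    intro hc
    have : (4 : ℕ) ∣ h := dvd_trans hc hdh
    omega
  have hd4 : d % 4 = 2 := by omega
  -- a and m are odd
  have haodd : a % 2 = 1 := by
    by_contra hx
    have h2a : 2 ∣ a := by omega
    obtain ⟨b, hb⟩ := h2a
    obtain ⟨e, hee⟩ := h2d
    have : (4 : ℕ) ∣ h := ⟨e * b, by rw [← hda, hee, hb]; ring⟩
    omega
  have hmodd : m % 2 = 1 := by
    by_contra hx
    have h2m : 2 ∣ m := by omega
    obtain ⟨b, hb⟩ := h2m
    obtain ⟨e, hee⟩ := h2d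
    have : (4 : ℕ) ∣ k := ⟨e * b, by rw [← hkdm, hee, hb]; ring⟩
    omega
  rw [Tpair,
    ← Finset.sum_filter_add_sum_filter_not (Finset.Icc 1 (2 * k - 1)) (fun j => k ∣ h * j)]
  have hzero : ∑ j ∈ (Finset.Icc 1 (2 * k - 1)).filter (fun j => ¬ k ∣ h * j),
      (-1 : ℤ) ^ (j + 1 + h * j / k) = 0 := by
    have g_mem : ∀ j ∈ (Finset.Icc 1 (2 * k - 1)).filter (fun j => ¬ k ∣ h * j),
        (2 * k - j) ∈ (Finset.Icc 1 (2 * k - 1)).filter (fun j => ¬ k ∣ h * j) := by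
      intro j hj
      simp only [Finset.mem_filter, Finset.mem_Icc] at hj ⊢
      obtain ⟨⟨hj1, hj2⟩, hndvd⟩ := hj
      refine ⟨⟨by omega, by omega⟩, ?_⟩
      intro hc
      apply hndvd
      have hmul : h * (2 * k - j) = 2 * h * k - h * j := by
        have h1 : h * (2 * k) = 2 * h * k := by ring
        rw [Nat.mul_sub]; omega
      have hle : h * j ≤ 2 * h * k := by
        have h1 : h * j ≤ h * (2 * k) := Nat.mul_le_mul_left h (by omega)
        have h2 : h * (2 * k) = 2 * h * k := by ring
        omega
      have h2k : k ∣ 2 * h * k := ⟨2 * h, by ring⟩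
      have heq : h * j = 2 * h * k - (2 * h * k - h * j) := by omega
      rw [heq]
      exact Nat.dvd_sub h2k (hmul ▸ hc)
    refine Finset.sum_involution (fun j _ => 2 * k - j) ?_ ?_ g_mem ?_
    · intro j hj
      simp only [Finset.mem_filter, Finset.mem_Icc] at hj
      obtain ⟨⟨hj1, hj2⟩, hndvd⟩ := hj
      show (-1 : ℤ) ^ (j + 1 + h * j / k)
          + (-1 : ℤ) ^ ((2 * k - j) + 1 + h * (2 * k - j) / k) = 0
      obtain ⟨q, hq⟩ : ∃ q, h * j / k = q := ⟨_, rfl⟩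
      obtain ⟨r, hr⟩ : ∃ r, h * j % k = r := ⟨_, rfl⟩
      have hqr : k * q + r = h * j := by rw [← hq, ← hr]; exact Nat.div_add_mod _ _
      have hrk : r < k := hr ▸ Nat.mod_lt _ hk
      have hr0 : r ≠ 0 := by
        rw [← hr]
        exact fun hc => hndvd (Nat.dvd_of_mod_eq_zero hc)
      have hqlt : q < 2 * h := by
        have h1 : h * j ≤ h * (2 * k - 1) := Nat.mul_le_mul_left h hj2
        have h2 : h * (2 * k) = 2 * h * k := by ring
        have h3 : h * (2 * k - 1) = h * (2 * k) - h * 1 := Nat.mul_sub h _ _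
        by_contra hc
        push_neg at hc
        have h4 : k * (2 * h) ≤ k * q := Nat.mul_le_mul_left k hc
        have h5 : k * (2 * h) = 2 * h * k := by ring
        omega
      have hmul : h * (2 * k - j) = 2 * h * k - h * j := by
        have h1 : h * (2 * k) = 2 * h * k := by ring
        rw [Nat.mul_sub]; omega
      have hb : k * q + k ≤ 2 * h * k := by
        have h1 : k * (q + 1) ≤ k * (2 * h) := Nat.mul_le_mul_left k hqlt
        have h2 : k * (q + 1) = k * q + k := by ring
        have h3 : k * (2 * h) = 2 * h * k := by ring
        omega
      have e1 : h * (2 * k - j) = (k - r) + k * (2 * h - q - 1) := by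
        have hs2 : k * (2 * h - q - 1) = 2 * h * k - k * q - k := by
          rw [Nat.mul_sub, Nat.mul_sub]
          have h5 : k * (2 * h) = 2 * h * k := by ring
          have h6 : k * 1 = k := by ring
          omega
        omega
      have e2 : h * (2 * k - j) / k = 2 * h - q - 1 := by
        rw [e1, Nat.add_mul_div_left _ _ hk, Nat.div_eq_of_lt (by omega), Nat.zero_add]
      rw [hq, e2]
      rcases Nat.even_or_odd (j + 1 + q) with he | ho
      · have hoy : Odd ((2 * k - j) + 1 + (2 * h - q - 1)) := by
          rw [Nat.even_iff] at he; rw [Nat.odd_iff]; omega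
        rw [he.neg_one_pow, hoy.neg_one_pow]; ring
      · have hey : Even ((2 * k - j) + 1 + (2 * h - q - 1)) := by
          rw [Nat.odd_iff] at ho; rw [Nat.even_iff]; omega
        rw [ho.neg_one_pow, hey.neg_one_pow]; ring
    · intro j hj _
      simp only [Finset.mem_filter, Finset.mem_Icc] at hj
      obtain ⟨⟨hj1, hj2⟩, hndvd⟩ := hj
      show 2 * k - j ≠ j
      intro hc
      have : j = k := by omega
      exact hndvd (this ▸ ⟨h, by ring⟩)
    · intro j hj
      simp only [Finset.mem_filter, Finset.mem_Icc] at hj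
      show 2 * k - (2 * k - j) = j
      omega
  rw [hzero, add_zero]
  have himg : (Finset.Icc 1 (2 * k - 1)).filter (fun j => k ∣ h * j)
      = (Finset.Icc 1 (2 * d - 1)).image (fun t => m * t) := by
    ext j
    simp only [Finset.mem_filter, Finset.mem_Icc, Finset.mem_image]
    constructor
    · rintro ⟨⟨h1, h2⟩, hdvd⟩
      have hmj : m ∣ j := by
        have h3 : d * m ∣ d * (a * j) := by
          rw [hkdm]
          rwa [← hda, mul_assoc] at hdvd
        have h4 : m ∣ a * j := (mul_dvd_mul_iff_left (by omega : d ≠ 0)).mp h3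
        exact (hcop.symm).dvd_of_dvd_mul_left h4
      obtain ⟨t, rfl⟩ := hmj
      have ht0 : t ≠ 0 := by rintro rfl; simp at h1
      refine ⟨t, ⟨by omega, ?_⟩, rfl⟩
      have h5 : m * t < m * (2 * d) := by
        have h6 : m * (2 * d) = 2 * (d * m) := by ring
        omega
      have := Nat.lt_of_mul_lt_mul_left h5
      omega
    · rintro ⟨t, ⟨ht1, ht2⟩, rfl⟩
      refine ⟨⟨Nat.mul_pos hm0 (by omega), ?_⟩, ⟨a * t, by rw [← hkdm, ← hda]; ring⟩⟩
      have h5 : m * t ≤ m * (2 * d - 1) := Nat.mul_le_mul_left m ht2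
      have h6 : m * (2 * d - 1) = 2 * (d * m) - m := by
        rw [Nat.mul_sub]
        have h7 : m * (2 * d) = 2 * (d * m) := by ring
        have h8 : m * 1 = m := by ring
        omega
      omega
  rw [himg, Finset.sum_image (fun x _ y _ hxy => Nat.eq_of_mul_eq_mul_left hm0 hxy)]
  have hconst : ∀ t ∈ Finset.Icc 1 (2 * d - 1),
      (-1 : ℤ) ^ (m * t + 1 + h * (m * t) / k) = -1 := by
    intro t ht
    have hde : h * (m * t) / k = a * t := by
      have h1 : h * (m * t) = (a * t) * k := by rw [← hkdm, ← hda]; ring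
      rw [h1, Nat.mul_div_cancel _ hk]
    rw [hde]
    have hodd : Odd (m * t + 1 + a * t) := by
      have h1 : m * t + 1 + a * t = (m + a) * t + 1 := by ring
      rw [h1]
      refine Even.add_one ?_
      have hev : Even (m + a) := by rw [Nat.even_iff]; omega
      exact hev.mul_right t
    exact hodd.neg_one_pow
  rw [Finset.sum_congr rfl hconst, Finset.sum_const, Nat.card_Icc]
  have hcast : ((2 * d - 1 + 1 - 1 : ℕ) : ℤ) = 2 * (d : ℤ) - 1 := by
    have h1 : 2 * d - 1 + 1 - 1 = 2 * d - 1 := by omega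
    rw [h1, Nat.cast_sub (by omega : 1 ≤ 2 * d)]
    push_cast
    ring
  rw [nsmul_eq_mul, hcast]
  ring
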